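/- Let H be a parity-check matrix of an [n,k,d] linear rank-metric code over F_{q^m} with minimum rank distance d = min_i d_i where C_1,…,C_ℓ ⊆ C are linear subcodes (heterogeneous interleaving with a joint supercode). If E ∈ F_{q^m}^{ℓ×n} satisfies rank_{F_q}(E) = rank_{F_{q^m}}(E) = t ≤ d−2 and each row of the codeword matrix lies in its respective subcode C_i ⊆ C, then the codeword matrix is uniquely recoverable from R = C₀ + E: any two such decompositions R = C₁+E₁ = C₂+E₂ with the stated conditions coincide. -/

import Mathlib

open Matrix

noncomputable def extV {K L : Type} [Field K] [Field L] [Algebra K L]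
    {m n : ℕ} (γ : Module.Basis (Fin m) K L) (v : Fin n → L) : Matrix (Fin m) (Fin n) K :=
  Matrix.of fun i j => γ.repr (v j) i

noncomputable def extM {K L : Type} [Field K] [Field L] [Algebra K L]
    {m n : ℕ} {ι : Type} (γ : Module.Basis (Fin m) K L) (E : Matrix ι (Fin n) L) :
    Matrix (ι × Fin m) (Fin n) K :=
  Matrix.of fun p j => γ.repr (E p.1 j) p.2

section Aux

variable {K L : Type} [Field K] [Field L] [Algebra K L] {m n : ℕ}

/-- Coordinatewise embedding of `K^n` into `L^n`. -/
noncomputable def iotaK (K L : Type) [Field K] [Field L] [Algebra K L] (n : ℕ) :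
    (Fin n → K) →ₗ[K] (Fin n → L) :=
  (Algebra.linearMap K L).compLeft (Fin n)

lemma iotaK_apply (x : Fin n → K) (j : Fin n) : iotaK K L n x j = algebraMap K L (x j) := rfl

/-- If `v` lies in the `L`-span of the embedding of a `K`-subspace `W`, then all expansion
rows of `v` lie in `W`. -/
lemma rows_mem_of_mem_spanL (γ : Module.Basis (Fin m) K L) (W : Submodule K (Fin n → K))
    {v : Fin n → L} (hv : v ∈ Submodule.span L (iotaK K L n '' (W : Set (Fin n → K)))) :
    ∀ i, (fun j => γ.repr (v j) i) ∈ W := by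
  induction hv using Submodule.span_induction with
  | mem x hx =>
    obtain ⟨y, hy, rfl⟩ := hx
    intro i
    have h : (fun j => γ.repr (iotaK K L n y j) i) = (γ.repr 1 i) • y := by
      funext j
      simp [iotaK_apply, Algebra.algebraMap_eq_smul_one, mul_comm]
    rw [h]
    exact W.smul_mem _ hy
  | zero =>
    intro i
    have h : (fun j => γ.repr ((0 : Fin n → L) j) i) = (0 : Fin n → K) := by
      funext j; simp
    rw [h]; exact W.zero_mem
  | add x y hx hy ihx ihy =>
    intro i
    have h : (fun j => γ.repr ((x + y) j) i)
        = (fun j => γ.repr (x j) i) + fun j => γ.repr (y j) i := by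
      funext j; simp
    rw [h]; exact W.add_mem (ihx i) (ihy i)
  | smul α x hx ih =>
    intro i
    have key : (fun j => γ.repr ((α • x) j) i)
        = ∑ s, γ.repr (α * γ s) i • fun j => γ.repr (x j) s := by
      funext j
      have hx1 : α • x j = ∑ s, γ.repr (x j) s • (α * γ s) := by
        calc α • x j = α * ∑ s, γ.repr (x j) s • γ s := by rw [γ.sum_repr]; rfl
          _ = ∑ s, γ.repr (x j) s • (α * γ s) := by
              rw [Finset.mul_sum]
              exact Finset.sum_congr rfl fun s _ => (mul_smul_comm _ _ _)
      rw [Pi.smul_apply, hx1, map_sum, Finset.sum_apply, Finsupp.finset_sum_apply]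
      refine Finset.sum_congr rfl fun s _ => ?_
      simp [mul_comm]
    rw [key]
    exact Submodule.sum_mem _ fun s _ => W.smul_mem _ (ih s)

/-- Conversely, if all expansion rows of `v` lie in `W`, then `v` lies in the
`L`-span of the embedding of `W`. -/
lemma mem_spanL_of_rows_mem (γ : Module.Basis (Fin m) K L) (W : Submodule K (Fin n → K))
    {v : Fin n → L} (hrows : ∀ i, (fun j => γ.repr (v j) i) ∈ W) :
    v ∈ Submodule.span L (iotaK K L n '' (W : Set (Fin n → K))) := by
  have hv : v = ∑ i, γ i • iotaK K L n (fun j => γ.repr (v j) i) := by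
    funext j
    rw [Finset.sum_apply]
    calc v j = ∑ i, γ.repr (v j) i • γ i := (γ.sum_repr (v j)).symm
      _ = ∑ i, (γ i • iotaK K L n (fun j' => γ.repr (v j') i)) j := by
          refine Finset.sum_congr rfl fun i _ => ?_
          simp [iotaK_apply, Algebra.smul_def, mul_comm]
  rw [hv]
  exact Submodule.sum_mem _ fun i _ =>
    Submodule.smul_mem _ _ (Submodule.subset_span ⟨_, hrows i, rfl⟩)

/-- The `L`-span of the embedding of `W` has `L`-dimension at most `dim_K W`. -/
lemma finrank_spanL_le (W : Submodule K (Fin n → K)) :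
    Module.finrank L (Submodule.span L (iotaK K L n '' (W : Set (Fin n → K))))
      ≤ Module.finrank K W := by
  classical
  set r := Module.finrank K W with hr
  let b := Module.finBasis K W
  have hle : Submodule.span L (iotaK K L n '' (W : Set (Fin n → K)))
      ≤ Submodule.span L (Set.range fun i : Fin r => iotaK K L n (b i : Fin n → K)) := by
    rw [Submodule.span_le]
    rintro _ ⟨w, hw, rfl⟩
    have hw2 : w = ∑ i, b.repr ⟨w, hw⟩ i • (b i : Fin n → K) := by
      have h := congrArg (Submodule.subtype W) (b.sum_repr ⟨w, hw⟩).symm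
      simp only [map_sum, map_smul, Submodule.subtype_apply] at h; exact h
    rw [hw2, map_sum]
    refine Submodule.sum_mem _ fun i _ => ?_
    rw [LinearMap.map_smul, ← algebraMap_smul L (b.repr ⟨w, hw⟩ i)]
    exact Submodule.smul_mem _ _ (Submodule.subset_span ⟨i, rfl⟩)
  refine le_trans (Submodule.finrank_mono hle) ?_
  simpa [Set.finrank] using (finrank_range_le_card (R := L) fun i : Fin r => iotaK K L n (b i : Fin n → K))

end Aux

/-- heterogeneous interleaving with a joint supercode: let `C` be a linear
`[n,k,d]` rank-metric code over `F_{q^m}` containing constituent codes `C₁,…,C_ℓ`, with `d`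
its minimum rank distance. If heterogeneous interleaved codewords `X₁, X₂` (the `i`-th row of
`Xⱼ` lying in the `i`-th constituent code) and errors `E₁, E₂`, each satisfying
`rank_{F_q}(Eⱼ) = rank_{F_{q^m}}(Eⱼ) ≤ d - 2`, give the same received word
`X₁ + E₁ = X₂ + E₂`, then `X₁ = X₂` and `E₁ = E₂`. -/
theorem heterogeneous_unique_decoding {q m n k d ℓ : ℕ} (K L : Type) [Field K] [Fintype K]
    [Field L] [Fintype L] [Algebra K L] (hK : Fintype.card K = q) (hL : Fintype.card L = q ^ m)
    (γ : Module.Basis (Fin m) K L)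
    (C : Submodule L (Fin n → L)) (hk : Module.finrank L C = k)
    (hd : ∀ v ∈ C, v ≠ 0 → d ≤ (extV γ v).rank)
    (hd' : ∃ v ∈ C, v ≠ 0 ∧ (extV γ v).rank = d)
    (Csub : Fin ℓ → Submodule L (Fin n → L)) (hsub : ∀ i, Csub i ≤ C)
    (X₁ X₂ E₁ E₂ : Matrix (Fin ℓ) (Fin n) L)
    (hX₁ : ∀ i, X₁ i ∈ Csub i) (hX₂ : ∀ i, X₂ i ∈ Csub i)
    (hE₁full : E₁.rank = (extM γ E₁).rank) (hE₁t : (extM γ E₁).rank ≤ d - 2)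
    (hE₂full : E₂.rank = (extM γ E₂).rank) (hE₂t : (extM γ E₂).rank ≤ d - 2)
    (hR : X₁ + E₁ = X₂ + E₂) :
    X₁ = X₂ ∧ E₁ = E₂ := by
  classical
  set W₁ : Submodule K (Fin n → K) := Submodule.span K (Set.range (extM γ E₁)) with hW₁def
  set W₂ : Submodule K (Fin n → K) := Submodule.span K (Set.range (extM γ E₂)) with hW₂def
  have hrank1 : (extM γ E₁).rank = Module.finrank K W₁ := Matrix.rank_eq_finrank_span_row _
  have hrank2 : (extM γ E₂).rank = Module.finrank K W₂ := Matrix.rank_eq_finrank_span_row _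
  -- each row of `Eᵢ` lies in the `L`-span of the embedding of `Wᵢ`
  have hrow1 : ∀ i : Fin ℓ, E₁ i ∈ Submodule.span L (iotaK K L n '' (W₁ : Set (Fin n → K))) :=
    fun i => mem_spanL_of_rows_mem γ W₁ (fun s => Submodule.subset_span ⟨(i, s), rfl⟩)
  have hrow2 : ∀ i : Fin ℓ, E₂ i ∈ Submodule.span L (iotaK K L n '' (W₂ : Set (Fin n → K))) :=
    fun i => mem_spanL_of_rows_mem γ W₂ (fun s => Submodule.subset_span ⟨(i, s), rfl⟩)
  by_cases hdle : d ≤ 1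
  · -- then `d - 2 = 0` and both errors vanish
    have h0 : ∀ E : Matrix (Fin ℓ) (Fin n) L, (extM γ E).rank ≤ d - 2 → E = 0 := by
      intro E hE
      have hr0 : (extM γ E).rank = 0 := by omega
      rw [Matrix.rank_eq_finrank_span_row] at hr0
      have hbot : Submodule.span K (Set.range (extM γ E)) = ⊥ :=
        Submodule.finrank_eq_zero.mp hr0
      ext i j
      have hrow : ∀ s : Fin m, extM γ E (i, s) = 0 := by
        intro s
        have := Submodule.subset_span (R := K) (Set.mem_range_self (f := extM γ E) (i, s))
        rw [hbot] at this
        simpa using this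
      have hrepr : γ.repr (E i j) = 0 := by
        ext s
        have := congrFun (hrow s) j
        simpa [extM] using this
      have : E i j = 0 := by
        have := congrArg γ.repr.symm hrepr
        simpa using this
      simpa using this
    have hE1 : E₁ = 0 := h0 E₁ hE₁t
    have hE2 : E₂ = 0 := h0 E₂ hE₂t
    have hX : X₁ = X₂ := by rw [hE1, hE2, add_zero, add_zero] at hR; exact hR
    exact ⟨hX, by rw [hE1, hE2]⟩
  · push_neg at hdle
    -- d ≥ 2
    have hd2 : 2 ≤ d := hdle
    -- the joint space
    have hEq : Submodule.span L (Set.range E₂) ≤ Submodule.span L (Set.range E₁) ⊔ C := by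
      rw [Submodule.span_le]
      rintro _ ⟨i, rfl⟩
      have hdiff : E₂ i = E₁ i + (X₁ i - X₂ i) := by
        have h := congrFun hR i
        funext j
        have := congrFun h j
        simp only [Matrix.add_apply] at this
        simp only [Pi.add_apply, Pi.sub_apply]
        linear_combination -this
      rw [hdiff]
      exact Submodule.add_mem _
        (Submodule.mem_sup_left (Submodule.subset_span ⟨i, rfl⟩))
        (Submodule.mem_sup_right (sub_mem (hsub i (hX₁ i)) (hsub i (hX₂ i))))
    -- full-rank property of E₂
    have hfull2 : Submodule.span L (iotaK K L n '' (W₂ : Set (Fin n → K)))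
        = Submodule.span L (Set.range E₂) := by
      symm
      apply Submodule.eq_of_le_of_finrank_le
      · rw [Submodule.span_le]; rintro _ ⟨i, rfl⟩; exact hrow2 i
      · calc Module.finrank L (Submodule.span L (iotaK K L n '' (W₂ : Set (Fin n → K))))
            ≤ Module.finrank K W₂ := finrank_spanL_le W₂
          _ = (extM γ E₂).rank := hrank2.symm
          _ = E₂.rank := hE₂full.symm
          _ = Module.finrank L (Submodule.span L (Set.range E₂)) :=
              Matrix.rank_eq_finrank_span_row _
    -- key step : W₂ ≤ W₁
    have hW21 : W₂ ≤ W₁ := by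
      intro x hx
      have hιx : iotaK K L n x ∈ Submodule.span L (Set.range E₁) ⊔ C := by
        have h1 : iotaK K L n x ∈ Submodule.span L (iotaK K L n '' (W₂ : Set (Fin n → K))) :=
          Submodule.subset_span ⟨x, hx, rfl⟩
        rw [hfull2] at h1
        exact hEq h1
      obtain ⟨e, he, c, hc, hec⟩ := Submodule.mem_sup.mp hιx
      have hrowse : ∀ s, (fun j => γ.repr (e j) s) ∈ W₁ := by
        have he' : e ∈ Submodule.span L (iotaK K L n '' (W₁ : Set (Fin n → K))) := by
          have hle : Submodule.span L (Set.range E₁)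
              ≤ Submodule.span L (iotaK K L n '' (W₁ : Set (Fin n → K))) := by
            rw [Submodule.span_le]; rintro _ ⟨i, rfl⟩; exact hrow1 i
          exact hle he
        exact rows_mem_of_mem_spanL γ W₁ he'
      have hxrow : ∀ s, (fun j => γ.repr (iotaK K L n x j) s) = (γ.repr 1 s) • x := by
        intro s; funext j
        simp [iotaK_apply, Algebra.algebraMap_eq_smul_one, mul_comm]
      have hrowsc : ∀ s, (fun j => γ.repr (c j) s) ∈ W₁ ⊔ Submodule.span K {x} := by
        intro s
        have hc' : (fun j => γ.repr (c j) s)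
            = (γ.repr 1 s) • x - fun j => γ.repr (e j) s := by
          funext j
          have hcj : c j = iotaK K L n x j - e j := by
            have := congrFun hec j
            simp only [Pi.add_apply] at this
            linear_combination this
          have h2 : γ.repr (iotaK K L n x j) s = γ.repr 1 s * x j := by
            simp [iotaK_apply, Algebra.algebraMap_eq_smul_one, mul_comm]
          simp only [hcj, map_sub, Finsupp.sub_apply, Pi.sub_apply, Pi.smul_apply,
            smul_eq_mul, h2]
        rw [hc']
        exact sub_mem
          (Submodule.mem_sup_right (Submodule.smul_mem _ _
            (Submodule.subset_span (Set.mem_singleton x))))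
          (Submodule.mem_sup_left (hrowse s))
      have hsupfin : Module.finrank K (W₁ ⊔ Submodule.span K {x} : Submodule K (Fin n → K))
          ≤ d - 1 := by
        have h1 := Submodule.finrank_add_le_finrank_add_finrank W₁ (Submodule.span K {x})
        have h2 : Module.finrank K (Submodule.span K ({x} : Set (Fin n → K))) ≤ 1 := by
          simpa using finrank_span_le_card (R := K) ({x} : Set (Fin n → K))
        have h3 : Module.finrank K W₁ ≤ d - 2 := hrank1 ▸ hE₁t
        omega
      have hcrank : (extV γ c).rank ≤ d - 1 := by
        rw [Matrix.rank_eq_finrank_span_row]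
        refine le_trans (Submodule.finrank_mono ?_) hsupfin
        rw [Submodule.span_le]
        rintro _ ⟨s, rfl⟩
        exact hrowsc s
      have hc0 : c = 0 := by
        by_contra h
        have := hd c hc h
        omega
      have hιx' : iotaK K L n x ∈ Submodule.span L (iotaK K L n '' (W₁ : Set (Fin n → K))) := by
        have hxe : iotaK K L n x = e := by rw [← hec, hc0, add_zero]
        rw [hxe]
        have hle : Submodule.span L (Set.range E₁)
            ≤ Submodule.span L (iotaK K L n '' (W₁ : Set (Fin n → K))) := by
          rw [Submodule.span_le]; rintro _ ⟨i, rfl⟩; exact hrow1 i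
        exact hle he
      have hxrows := rows_mem_of_mem_spanL γ W₁ hιx'
      obtain ⟨s, hs⟩ : ∃ s, γ.repr (1 : L) s ≠ 0 := by
        by_contra h
        push_neg at h
        have h1 : γ.repr (1 : L) = 0 := by ext s; exact h s
        have : (1 : L) = 0 := by
          have := congrArg γ.repr.symm h1
          simpa using this
        exact one_ne_zero this
      have hmem := hxrows s
      rw [hxrow s] at hmem
      have := W₁.smul_mem (γ.repr 1 s)⁻¹ hmem
      rwa [inv_smul_smul₀ hs] at this
    -- conclude
    have hD : ∀ i, X₁ i - X₂ i = 0 := by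
      intro i
      have hcC : X₁ i - X₂ i ∈ C := sub_mem (hsub i (hX₁ i)) (hsub i (hX₂ i))
      have hdiff : X₁ i - X₂ i = E₂ i - E₁ i := by
        have h := congrFun hR i
        funext j
        have := congrFun h j
        simp only [Matrix.add_apply] at this
        simp only [Pi.sub_apply]
        linear_combination this
      have hrows : ∀ s, (fun j => γ.repr ((X₁ i - X₂ i) j) s) ∈ W₁ := by
        intro s
        have h1 : (fun j => γ.repr ((X₁ i - X₂ i) j) s)
            = (fun j => γ.repr (E₂ i j) s) - fun j => γ.repr (E₁ i j) s := by
          funext j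
          rw [hdiff]
          simp
        rw [h1]
        exact sub_mem (hW21 (Submodule.subset_span ⟨(i, s), rfl⟩))
          (Submodule.subset_span ⟨(i, s), rfl⟩)
      by_contra h
      have hge := hd _ hcC h
      have hle : (extV γ (X₁ i - X₂ i)).rank ≤ d - 2 := by
        rw [Matrix.rank_eq_finrank_span_row]
        have hmono : Submodule.span K (Set.range (extV γ (X₁ i - X₂ i))) ≤ W₁ := by
          rw [Submodule.span_le]
          rintro _ ⟨s, rfl⟩
          exact hrows s
        refine le_trans (Submodule.finrank_mono hmono) ?_
        rw [← hrank1]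
        exact hE₁t
      omega
    have hX : X₁ = X₂ := by
      funext i j
      have h := congrFun (hD i) j
      simp only [Pi.sub_apply, Pi.zero_apply] at h
      exact sub_eq_zero.mp h
    refine ⟨hX, ?_⟩
    rw [hX] at hR
    exact add_left_cancel hR
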